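/- For any ring R and any integer n ≥ 2, R is almost Armendariz if and only if the quotient ring R[x]/⟨xⁿ⟩ is almost Armendariz. -/

import Mathlib

/-- An element `a` of a ring `R` is *strongly nilpotent* if every sequence
`a₀ = a`, `aₙ₊₁ ∈ aₙ R aₙ` is eventually zero. -/
def IsStronglyNilpotent {R : Type*} [Ring R] (a : R) : Prop :=
  ∀ s : ℕ → R, s 0 = a → (∀ n : ℕ, ∃ r : R, s (n + 1) = s n * r * s n) → ∃ n : ℕ, s n = 0

/-- The prime radical `P(R)` of a ring `R`: the intersection of all prime two-sided
ideals of `R`, equivalently the set of strongly nilpotent elements of `R`. -/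
def primeRadical (R : Type*) [Ring R] : Set R :=
  {a : R | IsStronglyNilpotent a}

/-- A ring `R` is *almost Armendariz* if whenever `f, g ∈ R[x]` satisfy `f g = 0`, every
product of a coefficient of `f` with a coefficient of `g` lies in the prime radical `P(R)`. -/
def IsAlmostArmendariz (R : Type*) [Ring R] : Prop :=
  ∀ f g : Polynomial R, f * g = 0 → ∀ i j : ℕ, f.coeff i * g.coeff j ∈ primeRadical R

open Polynomial

/-- The constant coefficient as a ring hom (works over noncommutative rings). -/
noncomputable def constCoeffHom (R : Type*) [Ring R] : R[X] →+* R where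
  toFun p := p.coeff 0
  map_one' := by simp
  map_mul' p q := mul_coeff_zero p q
  map_zero' := by simp
  map_add' p q := by simp

private lemma central_helper {A : Type*} [Ring A] (a u v w : A) (ha : ∀ x, x * a = a * x) :
    a * u * v * (a * w) = a * a * (u * v * w) := by
  have ha' : ∀ x y : A, x * (a * y) = a * (x * y) := fun x y => by
    rw [← mul_assoc, ha, mul_assoc]
  simp only [mul_assoc]
  rw [ha' v w, ha' u (v * w)]

section Key

variable {R : Type*} [Ring R] (n : ℕ)

noncomputable def myPi : R[X] →+* RingQuot (fun p q : Polynomial R => p = Polynomial.X ^ n ∧ q = 0) :=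
  RingQuot.mkRingHom _

lemma myPi_Xpow : myPi (R := R) n (X ^ n) = 0 := by
  have : myPi (R := R) n (X ^ n) = myPi (R := R) n 0 :=
    RingQuot.mkRingHom_rel ⟨rfl, rfl⟩
  simpa using this

lemma constCoeff_w (hn : 1 ≤ n) : ∀ ⦃p q : R[X]⦄, (p = X ^ n ∧ q = 0) →
    constCoeffHom R p = constCoeffHom R q := by
  rintro p q ⟨rfl, rfl⟩
  show (X ^ n : R[X]).coeff 0 = (0 : R[X]).coeff 0
  rw [coeff_X_pow, if_neg (by omega), coeff_zero]

/-- If `π p = 0` then the constant coefficient of `p` is zero. -/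
lemma coeff_zero_of_pi_eq_zero (hn : 1 ≤ n) {p : R[X]} (hp : myPi (R := R) n p = 0) :
    p.coeff 0 = 0 := by
  have := congrArg (RingQuot.lift ⟨constCoeffHom R, constCoeff_w n hn⟩) hp
  rwa [myPi, RingQuot.lift_mkRingHom_apply, map_zero] at this

/-- Key lemma: if the constant coefficient of `h` is strongly nilpotent in `R`,
then `π h` is strongly nilpotent in the quotient. -/
lemma key (hn : 1 ≤ n) {h : R[X]} (hh : IsStronglyNilpotent (h.coeff 0)) :
    IsStronglyNilpotent (myPi (R := R) n h) := by
  intro t ht0 ht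
  have surj := RingQuot.mkRingHom_surjective
    (fun p q : Polynomial R => p = Polynomial.X ^ n ∧ q = 0)
  choose r hr using ht
  choose q hq using fun k => surj (r k)
  have hq' : ∀ k, myPi (R := R) n (q k) = r k := hq
  set p : ℕ → R[X] := fun k => Nat.rec h (fun k pk => pk * q k * pk) k with hp
  have hp0 : p 0 = h := rfl
  have hpsucc : ∀ k, p (k + 1) = p k * q k * p k := fun _ => rfl
  have hpi : ∀ k, myPi (R := R) n (p k) = t k := by
    intro k
    induction k with
    | zero => rw [hp0, ht0]
    | succ k ih => rw [hpsucc, map_mul, map_mul, ih, hq', hr]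
  obtain ⟨N, hN⟩ := hh (fun k => (p k).coeff 0) rfl (by
    intro k
    exact ⟨(q k).coeff 0, by simp only [hpsucc, mul_coeff_zero]⟩)
  have hdvd : ∀ k, (X : R[X]) ^ (2 ^ k) ∣ p (N + k) := by
    intro k
    induction k with
    | zero => simpa using X_dvd_iff.mpr hN
    | succ k ih =>
      obtain ⟨u, hu⟩ := ih
      refine ⟨u * q (N + k) * u, ?_⟩
      have h2 : 2 ^ (k + 1) = 2 ^ k + 2 ^ k := by omega
      rw [Nat.add_succ, hpsucc, hu, h2, pow_add]
      exact central_helper _ _ _ _ (fun x => X_pow_mul.symm)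
  obtain ⟨v, hv⟩ := dvd_trans (pow_dvd_pow X (Nat.lt_two_pow_self (n := n)).le) (hdvd n)
  exact ⟨N + n, by rw [← hpi, hv, map_mul, myPi_Xpow, zero_mul]⟩

end Key

theorem almostArmendariz_iff_quotient_X_pow {R : Type*} [Ring R] (n : ℕ) (hn : 2 ≤ n) :
    IsAlmostArmendariz R ↔
      IsAlmostArmendariz
        (RingQuot (fun p q : Polynomial R => p = Polynomial.X ^ n ∧ q = 0)) := by
  have hn1 : 1 ≤ n := by omega
  constructor
  · -- hard direction
    intro hR F G hFG i j
    obtain ⟨f, hf⟩ := Polynomial.map_surjective _ (RingQuot.mkRingHom_surjective _) F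
    obtain ⟨g, hg⟩ := Polynomial.map_surjective _ (RingQuot.mkRingHom_surjective _) G
    -- the constant-coefficient images multiply to zero in R[Y]
    have hker : ∀ m, ((f * g).coeff m).coeff 0 = 0 := by
      intro m
      apply coeff_zero_of_pi_eq_zero n hn1
      have : (f * g).map (myPi (R := R) n) = 0 := by
        rw [Polynomial.map_mul]
        show f.map (RingQuot.mkRingHom _) * g.map (RingQuot.mkRingHom _) = 0
        rw [hf, hg, hFG]
      have h0 : ((f * g).map (myPi (R := R) n)).coeff m = 0 := by rw [this]; simp
      rwa [Polynomial.coeff_map] at h0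
    have hzero : f.map (constCoeffHom R) * g.map (constCoeffHom R) = 0 := by
      rw [← Polynomial.map_mul]
      ext m
      simp only [Polynomial.coeff_map, Polynomial.coeff_zero]
      exact hker m
    have := hR _ _ hzero i j
    simp only [Polynomial.coeff_map] at this
    have hmem : ((f.coeff i * g.coeff j : R[X]).coeff 0) ∈ primeRadical R := by
      rwa [mul_coeff_zero]
    have hsn : IsStronglyNilpotent (myPi (R := R) n (f.coeff i * g.coeff j)) :=
      key n hn1 hmem
    have hFi : F.coeff i = myPi (R := R) n (f.coeff i) := by
      rw [← hf]; simp [Polynomial.coeff_map, myPi]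
    have hGj : G.coeff j = myPi (R := R) n (g.coeff j) := by
      rw [← hg]; simp [Polynomial.coeff_map, myPi]
    show IsStronglyNilpotent (F.coeff i * G.coeff j)
    rw [hFi, hGj, ← map_mul]
    exact hsn
  · -- easy direction
    intro hS f g hfg i j
    set ψ : R →+* RingQuot (fun p q : Polynomial R => p = Polynomial.X ^ n ∧ q = 0) :=
      (myPi (R := R) n).comp (Polynomial.C : R →+* R[X]) with hψ
    have : f.map ψ * g.map ψ = 0 := by
      rw [← Polynomial.map_mul, hfg, Polynomial.map_zero]
    have hmem := hS _ _ this i j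
    simp only [Polynomial.coeff_map] at hmem
    -- pull back strong nilpotence along ψ
    intro s hs0 hstep
    have hseq : ∀ k : ℕ, ∃ r', ψ (s (k + 1)) = ψ (s k) * r' * ψ (s k) := by
      intro k
      obtain ⟨r, hr⟩ := hstep k
      exact ⟨ψ r, by rw [hr, map_mul, map_mul]⟩
    obtain ⟨N, hN⟩ := hmem (fun k => ψ (s k)) (by show ψ (s 0) = _; rw [hs0, map_mul]) hseq
    refine ⟨N, ?_⟩
    have : (Polynomial.C (s N) : R[X]).coeff 0 = 0 :=
      coeff_zero_of_pi_eq_zero n hn1 hN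
    simpa using this
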